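/- arXiv:1511.05221 — 4 statements merged into one kernel-verified Lean document; each statement's English description precedes it below -/
import Mathlib

section
/- In any algebra satisfying C0–C3, C5 and C7, for all i ≠ j and all x: d_{ij} · c_i(d_{ij} · x) ≤ x. -/
/-- In any algebra satisfying C0–C3, C5 and C7: for all `i ≠ j` and all `x`,
`d i j ⊓ c i (d i j ⊓ x) ≤ x`. -/
theorem stmt_4 {n : ℕ} {B : Type*} [BooleanAlgebra B]
    (c : Fin n → B → B) (d : Fin n → Fin n → B)
    (hC1 : ∀ i : Fin n, c i ⊥ = ⊥)
    (hC2 : ∀ (i : Fin n) (x : B), x ≤ c i x)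
    (hC3 : ∀ (i : Fin n) (x y : B), c i (x ⊓ c i y) = c i x ⊓ c i y)
    (hC5 : ∀ i : Fin n, d i i = ⊤)
    (hC7 : ∀ (i j : Fin n) (x : B), i ≠ j → c i (d i j ⊓ x) ⊓ c i (d i j ⊓ xᶜ) = ⊥) :
    ∀ (i j : Fin n) (x : B), i ≠ j → d i j ⊓ c i (d i j ⊓ x) ≤ x := by
  intro i j x hij
  have h7 := hC7 i j x hij
  have key : d i j ⊓ c i (d i j ⊓ x) ⊓ xᶜ = ⊥ := by
    refine le_bot_iff.mp ?_
    calc d i j ⊓ c i (d i j ⊓ x) ⊓ xᶜ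
        ≤ c i (d i j ⊓ x) ⊓ c i (d i j ⊓ xᶜ) := by
          refine le_inf (inf_le_left.trans inf_le_right) ?_
          exact (le_inf (inf_le_left.trans inf_le_left) inf_le_right).trans
            (hC2 i (d i j ⊓ xᶜ))
      _ = ⊥ := h7
  have : (d i j ⊓ c i (d i j ⊓ x)) \ x = ⊥ := by
    rw [sdiff_eq]; exact key
  exact sdiff_eq_bot_iff.mp this
end

section
/- Let S = ⟨S, T_i, E_{ij}⟩ be a structure of type cat_n in which each T_i is an equivalence relation (AS1) and each E_{ii} = S (AS2). Then Cm(S) satisfies axiom C7, i.e. T_i*(E_{ij} ∩ X) ∩ T_i*(E_{ij} ∩ (S \ X)) = ∅ for all X ⊆ S and i ≠ j, if and only if S satisfies AS5: the restriction of T_i to E_{ij} × E_{ij} is contained in the identity relation, for all i ≠ j. -/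
/-- The cylindrification operation of the complex algebra `Cm(S)`. -/
def cstar {S : Type*} (T : S → S → Prop) (X : Set S) : Set S := {y | ∃ x ∈ X, T x y}

/-- For a `cat_n`-structure satisfying AS1 (each `T i` an equivalence relation) and
AS2 (`E i i = S`), the complex algebra `Cm(S)` satisfies C7, i.e.
`T_i*(E_ij ∩ X) ∩ T_i*(E_ij ∩ Xᶜ) = ∅` for all `X` and `i ≠ j`, if and only if
`S` satisfies AS5: `T i` restricted to `E i j × E i j` is contained in the identity. -/
theorem stmt_6 {n : ℕ} {S : Type*} (T : Fin n → S → S → Prop)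
    (E : Fin n → Fin n → Set S)
    (hAS1 : ∀ i : Fin n, Equivalence (T i))
    (hAS2 : ∀ i : Fin n, E i i = Set.univ) :
    (∀ (i j : Fin n), i ≠ j → ∀ X : Set S,
        cstar (T i) (E i j ∩ X) ∩ cstar (T i) (E i j ∩ Xᶜ) = ∅)
    ↔ (∀ (i j : Fin n), i ≠ j →
        ∀ x y : S, T i x y → x ∈ E i j → y ∈ E i j → x = y) := by
  constructor
  · intro h i j hij x y hT hx hy
    by_contra hne
    have := h i j hij {x}
    have hmem : y ∈ cstar (T i) (E i j ∩ {x}) ∩ cstar (T i) (E i j ∩ ({x} : Set S)ᶜ) := by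
      constructor
      · exact ⟨x, ⟨hx, rfl⟩, hT⟩
      · exact ⟨y, ⟨hy, fun h' => hne (h'.symm)⟩, (hAS1 i).refl y⟩
    rw [this] at hmem
    exact hmem
  · intro h i j hij X
    ext z
    simp only [Set.mem_inter_iff, Set.mem_empty_iff_false, iff_false]
    rintro ⟨⟨x, ⟨hxE, hxX⟩, hxz⟩, ⟨y, ⟨hyE, hyX⟩, hyz⟩⟩
    have hxy : T i x y := (hAS1 i).trans hxz ((hAS1 i).symm hyz)
    exact hyX (h i j hij x y hxy hxE hyE ▸ hxX)
end

section
/- In a Boolean algebra with operators of type cyl_n, every normal form of degree k+1 lies below a unique normal form of degree k; more precisely, for each σ ∈ F^{n,m}_{k+1} there is exactly one τ ∈ F^{n,m}_k with σ ≤ τ valid in all Boolean algebras with operators of type cyl_n, provided σ is satisfiable in the class (i.e. not identically 0). -/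
/-- The set of atomic generators: diagonals `d i j` and the `m` free variables. -/
abbrev DAtom (n m : ℕ) : Type := Fin n × Fin n ⊕ Fin m

/-- The type of normal forms of degree `k` (for type `cyl_n` over `m` variables).
A normal form of degree `0` is a complete conjunction over `D = {d_ij} ∪ {x_0,…,x_{m-1}}`,
i.e. it is coded by a sign function `β : D → Bool`.  A normal form of degree `k+1` is a
complete conjunction over `D` together with the cylindrifications `c i σ` of all normal
forms `σ` of degree `k`, coded by a pair of sign functions. -/
def NF (n m : ℕ) : ℕ → Type
  | 0 => DAtom n m → Bool
  | k + 1 => (DAtom n m → Bool) × (Fin n × NF n m k → Bool)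

/-- Normal forms of each degree form a finite type with decidable equality. -/
def NF.inst (n m : ℕ) : ∀ k, Fintype (NF n m k) × DecidableEq (NF n m k)
  | 0 =>
    (inferInstanceAs (Fintype (DAtom n m → Bool)),
     inferInstanceAs (DecidableEq (DAtom n m → Bool)))
  | k + 1 =>
    letI := (NF.inst n m k).1
    letI := (NF.inst n m k).2
    (inferInstanceAs (Fintype ((DAtom n m → Bool) × (Fin n × NF n m k → Bool))),
     inferInstanceAs (DecidableEq ((DAtom n m → Bool) × (Fin n × NF n m k → Bool))))

instance (n m k : ℕ) : Fintype (NF n m k) := (NF.inst n m k).1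
instance (n m k : ℕ) : DecidableEq (NF n m k) := (NF.inst n m k).2

/-- Evaluation of an atomic generator in an algebra of type `cyl_n`. -/
def dEval {n m : ℕ} {B : Type*} (d : Fin n → Fin n → B) (v : Fin m → B) :
    DAtom n m → B
  | .inl (i, j) => d i j
  | .inr i => v i

/-- Evaluation of a normal form of degree `k` in a Boolean algebra with operators
`c i` and constants `d i j`, under the evaluation `v` of the variables. -/
def nfEval {n m : ℕ} {B : Type*} [BooleanAlgebra B] (c : Fin n → B → B)
    (d : Fin n → Fin n → B) (v : Fin m → B) : ∀ k, NF n m k → B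
  | 0, β =>
      Finset.univ.inf fun a : DAtom n m =>
        if β a then dEval d v a else (dEval d v a)ᶜ
  | k + 1, σ =>
      let σ' : (DAtom n m → Bool) × (Fin n × NF n m k → Bool) := σ
      (Finset.univ.inf fun a : DAtom n m =>
        if σ'.1 a then dEval d v a else (dEval d v a)ᶜ) ⊓
      Finset.univ.inf fun p : Fin n × NF n m k =>
        if σ'.2 p then c p.1 (nfEval c d v k p.2)
        else (c p.1 (nfEval c d v k p.2))ᶜ

section Lit
variable {B : Type*} [BooleanAlgebra B] {I : Type*} [Fintype I] [DecidableEq I]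

omit [DecidableEq I] in
lemma lit_disjoint (f : I → B) {g₁ g₂ : I → Bool} (h : g₁ ≠ g₂) :
    (Finset.univ.inf fun i => if g₁ i then f i else (f i)ᶜ) ⊓
      (Finset.univ.inf fun i => if g₂ i then f i else (f i)ᶜ) = ⊥ := by
  obtain ⟨i, hi⟩ := Function.ne_iff.mp h
  have h₁ : (Finset.univ.inf fun i => if g₁ i then f i else (f i)ᶜ) ≤
      (if g₁ i then f i else (f i)ᶜ) := Finset.inf_le (Finset.mem_univ i)
  have h₂ : (Finset.univ.inf fun i => if g₂ i then f i else (f i)ᶜ) ≤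
      (if g₂ i then f i else (f i)ᶜ) := Finset.inf_le (Finset.mem_univ i)
  cases hg₁ : g₁ i <;> cases hg₂ : g₂ i <;> simp [hg₁, hg₂] at hi h₁ h₂ ⊢
  · exact le_bot_iff.mp <| (inf_le_inf h₁ h₂).trans (by simp)
  · exact le_bot_iff.mp <| (inf_le_inf h₁ h₂).trans (by simp)

lemma lit_cover_aux (f : I → B) (s : Finset I) :
    (⊤ : B) ≤ Finset.univ.sup fun g : I → Bool =>
      s.inf fun i => if g i then f i else (f i)ᶜ := by
  induction s using Finset.induction_on with
  | empty =>
    refine le_trans ?_ (Finset.le_sup (Finset.mem_univ fun _ => true))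
    simp
  | @insert a s ha ih =>
    have key : ∀ (b : Bool) (g : I → Bool),
        (if b then f a else (f a)ᶜ) ⊓ (s.inf fun i => if g i then f i else (f i)ᶜ) ≤
          Finset.univ.sup fun g : I → Bool =>
            (insert a s).inf fun i => if g i then f i else (f i)ᶜ := by
      intro b g
      refine le_trans ?_ (Finset.le_sup (Finset.mem_univ (Function.update g a b)))
      rw [Finset.inf_insert]
      refine inf_le_inf (by simp) (le_of_eq (Finset.inf_congr rfl ?_))
      intro i hi
      exact Function.update_of_ne (fun h : i = a => ha (h ▸ hi)) _ _ ▸ rfl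
    calc (⊤ : B) = (f a ⊓ ⊤) ⊔ ((f a)ᶜ ⊓ ⊤) := by simp
    _ ≤ (f a ⊓ Finset.univ.sup fun g : I → Bool =>
          s.inf fun i => if g i then f i else (f i)ᶜ) ⊔
        ((f a)ᶜ ⊓ Finset.univ.sup fun g : I → Bool =>
          s.inf fun i => if g i then f i else (f i)ᶜ) :=
      sup_le_sup (inf_le_inf_left _ ih) (inf_le_inf_left _ ih)
    _ ≤ _ := by
      rw [Finset.sup_inf_distrib_left, Finset.sup_inf_distrib_left]
      refine sup_le (Finset.sup_le fun g _ => ?_) (Finset.sup_le fun g _ => ?_)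
      · simpa using key true g
      · simpa using key false g

lemma lit_cover (f : I → B) :
    (Finset.univ.sup fun g : I → Bool =>
      Finset.univ.inf fun i => if g i then f i else (f i)ᶜ) = ⊤ :=
  le_antisymm le_top (lit_cover_aux f Finset.univ)

end Lit

section NFS
variable {n m : ℕ} {B : Type*} [BooleanAlgebra B]
  (c : Fin n → B → B) (d : Fin n → Fin n → B) (v : Fin m → B)

lemma nfEval_succ (k : ℕ) (σ : NF n m (k + 1)) :
    nfEval c d v (k + 1) σ =
      (Finset.univ.inf fun a : DAtom n m =>
        if σ.1 a then dEval d v a else (dEval d v a)ᶜ) ⊓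
      Finset.univ.inf fun p : Fin n × NF n m k =>
        if σ.2 p then c p.1 (nfEval c d v k p.2)
        else (c p.1 (nfEval c d v k p.2))ᶜ := rfl

lemma nfEval_disjoint (k : ℕ) (σ τ : NF n m k) (h : σ ≠ τ) :
    nfEval c d v k σ ⊓ nfEval c d v k τ = ⊥ := by
  cases k with
  | zero => exact lit_disjoint _ h
  | succ k =>
    rw [nfEval_succ, nfEval_succ]
    rcases (not_and_or.mp (fun hc => h (Prod.ext hc.1 hc.2))) with h1 | h1
    · refine le_bot_iff.mp (le_trans (inf_le_inf inf_le_left inf_le_left) ?_)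
      exact (lit_disjoint _ h1).le
    · refine le_bot_iff.mp (le_trans (inf_le_inf inf_le_right inf_le_right) ?_)
      exact (lit_disjoint _ h1).le

lemma nfEval_cover (k : ℕ) :
    (Finset.univ.sup fun σ : NF n m k => nfEval c d v k σ) = ⊤ := by
  cases k with
  | zero => exact lit_cover _
  | succ k =>
    refine le_antisymm le_top ?_
    have : (Finset.univ : Finset (NF n m (k + 1))) =
        (Finset.univ : Finset (DAtom n m → Bool)) ×ˢ
          (Finset.univ : Finset (Fin n × NF n m k → Bool)) := rfl
    show ⊤ ≤ ((Finset.univ : Finset (DAtom n m → Bool)) ×ˢ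
          (Finset.univ : Finset (Fin n × NF n m k → Bool))).sup
        fun σ : (DAtom n m → Bool) × (Fin n × NF n m k → Bool) => nfEval c d v (k + 1) σ
    rw [Finset.sup_product_left]
    calc (⊤ : B) = ⊤ ⊓ ⊤ := by simp
    _ = (Finset.univ.sup fun β : DAtom n m → Bool =>
          Finset.univ.inf fun a : DAtom n m =>
            if β a then dEval d v a else (dEval d v a)ᶜ) ⊓
        (Finset.univ.sup fun γ : Fin n × NF n m k → Bool =>
          Finset.univ.inf fun p : Fin n × NF n m k =>
            if γ p then c p.1 (nfEval c d v k p.2)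
            else (c p.1 (nfEval c d v k p.2))ᶜ) := by
      rw [lit_cover, lit_cover]
    _ ≤ _ := by
      rw [Finset.sup_inf_distrib_right]
      refine Finset.sup_le fun β _ => ?_
      rw [Finset.sup_inf_distrib_left]
      refine Finset.sup_le fun γ _ => ?_
      calc _ = nfEval c d v (k+1) (β, γ) := rfl
      _ ≤ Finset.univ.sup fun γ' : Fin n × NF n m k → Bool =>
            nfEval c d v (k+1) (β, γ') :=
        Finset.le_sup (f := fun γ' : Fin n × NF n m k → Bool => nfEval c d v (k+1) (β, γ'))
          (Finset.mem_univ γ)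
      _ ≤ _ := Finset.le_sup
            (f := fun β' : DAtom n m → Bool => Finset.univ.sup fun γ' : Fin n × NF n m k → Bool =>
              nfEval c d v (k+1) (β', γ')) (Finset.mem_univ β)

end NFS

lemma cyl_mono {B : Type*} [BooleanAlgebra B] (c : B → B)
    (hadd : ∀ x y, c (x ⊔ y) = c x ⊔ c y) {x y : B} (h : x ≤ y) : c x ≤ c y := by
  calc c x ≤ c x ⊔ c y := le_sup_left
  _ = c (x ⊔ y) := (hadd x y).symm
  _ = c y := by rw [sup_eq_right.mpr h]

lemma cyl_finsetSup {B : Type*} [BooleanAlgebra B] (c : B → B) (h0 : c ⊥ = ⊥)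
    (hadd : ∀ x y, c (x ⊔ y) = c x ⊔ c y) {I : Type*} (s : Finset I) (f : I → B) :
    c (s.sup f) = s.sup fun i => c (f i) := by
  induction s using Finset.cons_induction with
  | empty => simpa
  | cons a s ha ih => simp [Finset.sup_cons, hadd, ih]

/-- Projection from normal forms of degree `k+1` to degree `k`. -/
def proj {n m : ℕ} : ∀ k, NF n m (k + 1) → NF n m k
  | 0, σ => σ.1
  | k + 1, σ =>
    (σ.1, fun p => decide (∃ ρ : NF n m (k + 1), proj k ρ = p.2 ∧ σ.2 (p.1, ρ) = true))

set_option maxHeartbeats 1600000 in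
lemma nfEval_le_proj {n m : ℕ} :
    ∀ (k : ℕ) (B : Type*) (_ : BooleanAlgebra B) (c : Fin n → B → B)
      (d : Fin n → Fin n → B) (v : Fin m → B),
      (∀ i, c i ⊥ = ⊥) → (∀ i (x y : B), c i (x ⊔ y) = c i x ⊔ c i y) →
      ∀ σ : NF n m (k + 1), nfEval c d v (k + 1) σ ≤ nfEval c d v k (proj k σ)
  | 0, B, _, c, d, v, h0, hadd, σ => by
    rw [nfEval_succ]
    exact inf_le_left
  | k + 1, B, _, c, d, v, h0, hadd, σ => by
    have IH := nfEval_le_proj k B _ c d v h0 hadd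
    -- preimage sup lemma at level k
    have pre : ∀ t : NF n m k, nfEval c d v k t ≤
        (Finset.univ.filter fun ρ : NF n m (k + 1) => proj k ρ = t).sup
          (nfEval c d v (k + 1)) := by
      intro t
      calc nfEval c d v k t = nfEval c d v k t ⊓
          Finset.univ.sup (fun ρ : NF n m (k + 1) => nfEval c d v (k + 1) ρ) := by
            rw [nfEval_cover]; simp
      _ = Finset.univ.sup fun ρ : NF n m (k + 1) =>
            nfEval c d v k t ⊓ nfEval c d v (k + 1) ρ := Finset.sup_inf_distrib_left _ _ _
      _ ≤ _ := by
        refine Finset.sup_le fun ρ _ => ?_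
        by_cases hρ : proj k ρ = t
        · exact le_trans inf_le_right
            (Finset.le_sup (Finset.mem_filter.mpr ⟨Finset.mem_univ _, hρ⟩))
        · have : nfEval c d v k t ⊓ nfEval c d v (k + 1) ρ ≤
              nfEval c d v k t ⊓ nfEval c d v k (proj k ρ) :=
            inf_le_inf_left _ (IH ρ)
          rw [nfEval_disjoint c d v k t (proj k ρ) (fun h => hρ h.symm)] at this
          exact le_trans this bot_le
    rw [nfEval_succ, nfEval_succ]
    refine inf_le_inf_left _ (Finset.le_inf fun p _ => ?_)
    show _ ≤ if (proj (k+1) σ).2 p then _ else _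
    by_cases hp : (proj (k + 1) σ).2 p
    · rw [if_pos hp]
      have : ∃ ρ : NF n m (k + 1), proj k ρ = p.2 ∧ σ.2 (p.1, ρ) = true := by
        simpa [proj] using hp
      obtain ⟨ρ, hρ, hσρ⟩ := this
      calc Finset.univ.inf (fun p' : Fin n × NF n m (k+1) =>
              if σ.2 p' then c p'.1 (nfEval c d v (k+1) p'.2)
              else (c p'.1 (nfEval c d v (k+1) p'.2))ᶜ)
          ≤ if σ.2 (p.1, ρ) then c p.1 (nfEval c d v (k+1) ρ)
              else (c p.1 (nfEval c d v (k+1) ρ))ᶜ := Finset.inf_le (Finset.mem_univ _)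
      _ = c p.1 (nfEval c d v (k+1) ρ) := by rw [if_pos hσρ]
      _ ≤ c p.1 (nfEval c d v k p.2) := by
          refine cyl_mono _ (hadd p.1) ?_
          rw [← hρ]; exact IH ρ
    · rw [if_neg hp]
      have hall : ∀ ρ : NF n m (k + 1), proj k ρ = p.2 → σ.2 (p.1, ρ) = false := by
        intro ρ hρ
        by_contra hc
        exact hp (by simp [proj]; exact ⟨ρ, hρ, by simpa using hc⟩)
      rw [le_compl_iff_disjoint_right, disjoint_iff_inf_le]
      have hle : c p.1 (nfEval c d v k p.2) ≤
          (Finset.univ.filter fun ρ : NF n m (k + 1) => proj k ρ = p.2).sup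
            fun ρ => c p.1 (nfEval c d v (k + 1) ρ) := by
        rw [← cyl_finsetSup _ (h0 p.1) (hadd p.1)]
        exact cyl_mono _ (hadd p.1) (pre p.2)
      refine le_trans (inf_le_inf_left _ hle) ?_
      rw [Finset.sup_inf_distrib_left]
      refine Finset.sup_le fun ρ hρ => ?_
      obtain ⟨-, hρ⟩ := Finset.mem_filter.mp hρ
      have h1 : Finset.univ.inf (fun p' : Fin n × NF n m (k+1) =>
              if σ.2 p' then c p'.1 (nfEval c d v (k+1) p'.2)
              else (c p'.1 (nfEval c d v (k+1) p'.2))ᶜ)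
          ≤ (c p.1 (nfEval c d v (k+1) ρ))ᶜ := by
        refine le_trans (Finset.inf_le (Finset.mem_univ (p.1, ρ))) ?_
        rw [if_neg (by simp [hall ρ hρ])]
      calc _ ≤ (c p.1 (nfEval c d v (k+1) ρ))ᶜ ⊓ c p.1 (nfEval c d v (k+1) ρ) :=
        inf_le_inf_right _ h1
      _ ≤ ⊥ := by simp

/-- Every normal form of degree `k+1` that is satisfiable in the class of Boolean
algebras with operators of type `cyl_n` (i.e. not identically `⊥`) lies below exactly
one normal form of degree `k`, in the sense of validity in all such algebras. -/
theorem stmt_10 (n m k : ℕ) (σ : NF n m (k + 1))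
    (hsat : ∃ (B : Type) (_ : BooleanAlgebra B)
        (c : Fin n → B → B) (d : Fin n → Fin n → B) (v : Fin m → B),
        (∀ i : Fin n, c i ⊥ = ⊥) ∧
        (∀ (i : Fin n) (x y : B), c i (x ⊔ y) = c i x ⊔ c i y) ∧
        nfEval c d v (k + 1) σ ≠ ⊥) :
    ∃! τ : NF n m k,
      ∀ (B : Type) (_ : BooleanAlgebra B)
        (c : Fin n → B → B) (d : Fin n → Fin n → B) (v : Fin m → B),
        (∀ i : Fin n, c i ⊥ = ⊥) →
        (∀ (i : Fin n) (x y : B), c i (x ⊔ y) = c i x ⊔ c i y) →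
        nfEval c d v (k + 1) σ ≤ nfEval c d v k τ := by
  refine ⟨proj k σ, ?_, ?_⟩
  · intro B _ c d v h0 hadd
    exact nfEval_le_proj k B _ c d v h0 hadd σ
  · intro τ hτ
    by_contra hne
    obtain ⟨B, _, c, d, v, h0, hadd, hne0⟩ := hsat
    have h1 := hτ B _ c d v h0 hadd
    have h2 := nfEval_le_proj k B _ c d v h0 hadd σ
    have hd := nfEval_disjoint c d v k τ (proj k σ) hne
    exact hne0 (le_bot_iff.mp (hd ▸ le_inf h1 h2))
end

section
/- Let S be a finite cat_n-structure satisfying AS1 (each T_i an equivalence relation), AS2 (E_{ii} = S), AS4, and AS5. Then the complex algebra Cm(S) is a finite member of WCA_n; in particular Cm(S) is a Boolean algebra with additive normal operators satisfying C2, C3, C5, WC6, C7. -/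
/-- For a finite `cat_n`-structure satisfying AS1, AS2, AS4 and AS5, the complex
algebra `Cm(S)` (the powerset Boolean algebra with operators `c i = T_i*` and
diagonals `E i j`) is a finite member of `WCA_n`: it is a finite Boolean algebra
whose operators are normal and additive and satisfy C2, C3, C5, WC6 and C7. -/
theorem stmt_18 {n : ℕ} {S : Type*} [Finite S]
    (T : Fin n → S → S → Prop) (E : Fin n → Fin n → Set S)
    (hAS1 : ∀ i : Fin n, Equivalence (T i))
    (hAS2 : ∀ i : Fin n, E i i = Set.univ)
    (hAS4 : ∀ i j k : Fin n, k ≠ i → k ≠ j →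
      E i j = E j i ∧ E i k ∩ E k j ⊆ E i j ∧ cstar (T k) (E i j) = E i j)
    (hAS5 : ∀ i j : Fin n, i ≠ j →
      ∀ x y : S, T i x y → x ∈ E i j → y ∈ E i j → x = y) :
    Finite (Set S) ∧
    (∀ i : Fin n, cstar (T i) ∅ = ∅) ∧
    (∀ (i : Fin n) (X Y : Set S),
      cstar (T i) (X ∪ Y) = cstar (T i) X ∪ cstar (T i) Y) ∧
    (∀ (i : Fin n) (X : Set S), X ⊆ cstar (T i) X) ∧
    (∀ (i : Fin n) (X Y : Set S),
      cstar (T i) (X ∩ cstar (T i) Y) = cstar (T i) X ∩ cstar (T i) Y) ∧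
    (∀ i : Fin n, E i i = Set.univ) ∧
    (∀ i j k : Fin n, k ≠ i → k ≠ j →
      E i k ∩ E k j ⊆ E i j ∧ E i j = E j i ∧ cstar (T k) (E j i) = E j i) ∧
    (∀ (i j : Fin n) (X : Set S), i ≠ j →
      cstar (T i) (E i j ∩ X) ∩ cstar (T i) (E i j ∩ Xᶜ) = ∅) := by
  refine ⟨inferInstance, ?_, ?_, ?_, ?_, hAS2, ?_, ?_⟩
  · intro i
    ext y
    simp [cstar]
  · intro i X Y
    ext y
    simp only [cstar, Set.mem_setOf_eq, Set.mem_union]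
    constructor
    · rintro ⟨x, hx | hx, hT⟩
      · exact Or.inl ⟨x, hx, hT⟩
      · exact Or.inr ⟨x, hx, hT⟩
    · rintro (⟨x, hx, hT⟩ | ⟨x, hx, hT⟩)
      · exact ⟨x, Or.inl hx, hT⟩
      · exact ⟨x, Or.inr hx, hT⟩
  · intro i X x hx
    exact ⟨x, hx, (hAS1 i).refl x⟩
  · intro i X Y
    ext y
    simp only [cstar, Set.mem_setOf_eq, Set.mem_inter_iff]
    constructor
    · rintro ⟨x, ⟨hxX, z, hzY, hT⟩, hxy⟩
      exact ⟨⟨x, hxX, hxy⟩, ⟨z, hzY, (hAS1 i).trans hT hxy⟩⟩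
    · rintro ⟨⟨x, hxX, hxy⟩, ⟨z, hzY, hzy⟩⟩
      exact ⟨x, ⟨hxX, z, hzY, (hAS1 i).trans hzy ((hAS1 i).symm hxy)⟩, hxy⟩
  · intro i j k hki hkj
    obtain ⟨h1, h2, h3⟩ := hAS4 i j k hki hkj
    obtain ⟨_, _, h3'⟩ := hAS4 j i k hkj hki
    exact ⟨h2, h1, h3'⟩
  · intro i j X hij
    ext y
    simp only [cstar, Set.mem_inter_iff, Set.mem_setOf_eq, Set.mem_empty_iff_false, iff_false]
    rintro ⟨⟨a, ⟨haE, haX⟩, haT⟩, ⟨b, ⟨hbE, hbX⟩, hbT⟩⟩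
    have hab : T i a b := (hAS1 i).trans haT ((hAS1 i).symm hbT)
    have := hAS5 i j hij a b hab haE hbE
    exact hbX (this ▸ haX)
end
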